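/- For every q ∈ C with 0 < |q| < 1 the theta constants satisfy Jacobi's identity θ_3(0,q)^4 = θ_2(0,q)^4 + θ_4(0,q)^4. -/

import Mathlib

/-- The theta constant `θ₂(0,q) = Σ_{n∈ℤ} q^{(n+1/2)²}`, where half-integer powers of `q`
are taken with the principal branch of the complex logarithm. -/
noncomputable def thetaTwo (q : ℂ) : ℂ := ∑' n : ℤ, q ^ (((n : ℂ) + 1 / 2) ^ 2)

/-- The theta constant `θ₃(0,q) = Σ_{n∈ℤ} q^{n²}`. -/
noncomputable def thetaThree (q : ℂ) : ℂ := ∑' n : ℤ, q ^ (n ^ 2)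

/-- The theta constant `θ₄(0,q) = Σ_{n∈ℤ} (-1)^n q^{n²}`. -/
noncomputable def thetaFour (q : ℂ) : ℂ := ∑' n : ℤ, (-1 : ℂ) ^ n * q ^ (n ^ 2)

open Real Complex

private lemma jacAux_sumExp (t : ℝ) (ht : 0 < t) :
    Summable (fun n : ℤ => Real.exp (-(t * (n : ℝ) ^ 2))) := by
  have h := summable_pow_mul_jacobiTheta₂_term_bound 0 (show 0 < t / π by positivity) 0
  refine h.congr fun n => ?_
  simp only [pow_zero, one_mul, mul_zero, zero_mul, sub_zero]
  congr 1
  field_simp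

private lemma jacAux_normCpowReal {q : ℂ} (hq : q ≠ 0) (r : ℝ) :
    ‖q ^ (r : ℂ)‖ = Real.exp (Real.log (‖q‖) * r) := by
  rw [Complex.norm_cpow_of_ne_zero hq]
  simp [Real.rpow_def_of_pos (norm_pos_iff.mpr hq)]

private lemma jacAux_normZpow {q : ℂ} (hq : q ≠ 0) (n : ℤ) :
    ‖q ^ (n ^ 2 : ℤ)‖ = Real.exp (Real.log (‖q‖) * (n : ℝ) ^ 2) := by
  rw [norm_zpow, ← Real.rpow_intCast ‖q‖ (n ^ 2),
    Real.rpow_def_of_pos (norm_pos_iff.mpr hq)]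
  push_cast
  ring_nf

private lemma jacAux_sum3 {q : ℂ} (h0 : 0 < ‖q‖) (h1 : ‖q‖ < 1) :
    Summable (fun n : ℤ => ‖q ^ (n ^ 2 : ℤ)‖) := by
  have hq : q ≠ 0 := fun h => by simp [h] at h0
  have hL : Real.log (‖q‖) < 0 := Real.log_neg h0 h1
  refine (jacAux_sumExp (-Real.log (‖q‖)) (by linarith)).congr fun n => ?_
  rw [jacAux_normZpow hq]
  ring_nf

private lemma jacAux_sum2 {q : ℂ} (h0 : 0 < ‖q‖) (h1 : ‖q‖ < 1) :
    Summable (fun n : ℤ => ‖q ^ (((n : ℂ) + 1 / 2) ^ 2)‖) := by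
  have hq : q ≠ 0 := fun h => by simp [h] at h0
  have hL : Real.log (‖q‖) < 0 := Real.log_neg h0 h1
  refine Summable.of_nonneg_of_le (fun n => norm_nonneg _) (fun n => ?_)
    (jacAux_sumExp (-Real.log (‖q‖) / 4) (by linarith))
  have hz : ((n : ℂ) + 1 / 2) ^ 2 = ((((n : ℝ) + 1 / 2) ^ 2 : ℝ) : ℂ) := by push_cast; ring
  rw [hz, jacAux_normCpowReal hq, Real.exp_le_exp]
  have hineq : (n : ℝ) ^ 2 / 4 ≤ ((n : ℝ) + 1 / 2) ^ 2 := by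
    rcases le_or_gt 0 n with h | h
    · have : (0 : ℝ) ≤ (n : ℝ) := by exact_mod_cast h
      nlinarith
    · have : (n : ℝ) ≤ -1 := by exact_mod_cast (by omega : n ≤ -1)
      nlinarith
  nlinarith [hineq, hL]

/-- The combined θ₂ four-fold summand. -/
private noncomputable def jacC (q : ℂ) (p : (ℤ × ℤ) × ℤ × ℤ) : ℂ :=
  q ^ (((p.1.1 : ℂ) + 1 / 2) ^ 2 + ((p.1.2 : ℂ) + 1 / 2) ^ 2 +
      ((p.2.1 : ℂ) + 1 / 2) ^ 2 + ((p.2.2 : ℂ) + 1 / 2) ^ 2)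

/-- The even-sum part of the θ₂ four-fold summand. -/
private noncomputable def jacE (q : ℂ) (p : (ℤ × ℤ) × ℤ × ℤ) : ℂ :=
  if Even (p.1.1 + p.1.2 + p.2.1 + p.2.2) then jacC q p else 0

/-- The odd-sum part of the θ₂ four-fold summand. -/
private noncomputable def jacO (q : ℂ) (p : (ℤ × ℤ) × ℤ × ℤ) : ℂ :=
  if Even (p.1.1 + p.1.2 + p.2.1 + p.2.2) then 0 else jacC q p

set_option maxHeartbeats 1000000 in
/-- Jacobi's identity `θ₃(0,q)⁴ = θ₂(0,q)⁴ + θ₄(0,q)⁴`. -/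
theorem jacobi_theta_identity (q : ℂ) (h0 : 0 < ‖q‖)
    (h1 : ‖q‖ < 1) :
    thetaThree q ^ 4 = thetaTwo q ^ 4 + thetaFour q ^ 4 := by
  classical
  have hq : q ≠ 0 := fun h => by simp [h] at h0
  have hm : (-1 : ℂ) ≠ 0 := by norm_num
  -- basic summability
  have hs3 : Summable (fun n : ℤ => ‖q ^ (n ^ 2)‖) := jacAux_sum3 h0 h1
  have hs4 : Summable (fun n : ℤ => ‖(-1 : ℂ) ^ n * q ^ (n ^ 2)‖) := by
    refine hs3.congr fun n => ?_
    rw [norm_mul, norm_zpow]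
    simp
  have hs2 : Summable (fun n : ℤ => ‖q ^ (((n : ℂ) + 1 / 2) ^ 2)‖) := jacAux_sum2 h0 h1
  -- pair level (no type ascriptions to avoid HO-unification blowups)
  have hn33 := hs3.mul_norm hs3
  have hn44 := hs4.mul_norm hs4
  have hn22 := hs2.mul_norm hs2
  -- quadruple expansions
  have E3 : thetaThree q ^ 4 = ∑' p : (ℤ × ℤ) × ℤ × ℤ,
      q ^ (p.1.1 ^ 2 + p.1.2 ^ 2 + p.2.1 ^ 2 + p.2.2 ^ 2) := by
    rw [show thetaThree q ^ 4 =
      (thetaThree q * thetaThree q) * (thetaThree q * thetaThree q) by ring]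
    unfold thetaThree
    rw [tsum_mul_tsum_of_summable_norm hs3 hs3,
      tsum_mul_tsum_of_summable_norm hn33 hn33]
    refine tsum_congr fun p => ?_
    rw [zpow_add₀ hq, zpow_add₀ hq, zpow_add₀ hq]
    ring
  have E4 : thetaFour q ^ 4 = ∑' p : (ℤ × ℤ) × ℤ × ℤ,
      (-1 : ℂ) ^ (p.1.1 + p.1.2 + p.2.1 + p.2.2) *
        q ^ (p.1.1 ^ 2 + p.1.2 ^ 2 + p.2.1 ^ 2 + p.2.2 ^ 2) := by
    rw [show thetaFour q ^ 4 =
      (thetaFour q * thetaFour q) * (thetaFour q * thetaFour q) by ring]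
    unfold thetaFour
    rw [tsum_mul_tsum_of_summable_norm hs4 hs4,
      tsum_mul_tsum_of_summable_norm hn44 hn44]
    refine tsum_congr fun p => ?_
    rw [zpow_add₀ hq, zpow_add₀ hq, zpow_add₀ hq, zpow_add₀ hm, zpow_add₀ hm, zpow_add₀ hm]
    ring
  have hterm2 : ∀ p : (ℤ × ℤ) × ℤ × ℤ,
      q ^ (((p.1.1 : ℂ) + 1 / 2) ^ 2) * q ^ (((p.1.2 : ℂ) + 1 / 2) ^ 2) *
        (q ^ (((p.2.1 : ℂ) + 1 / 2) ^ 2) * q ^ (((p.2.2 : ℂ) + 1 / 2) ^ 2)) = jacC q p := by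
    intro p
    unfold jacC
    rw [Complex.cpow_add _ _ hq, Complex.cpow_add _ _ hq, Complex.cpow_add _ _ hq]
    ring
  have E2 : thetaTwo q ^ 4 = ∑' p : (ℤ × ℤ) × ℤ × ℤ, jacC q p := by
    rw [show thetaTwo q ^ 4 = (thetaTwo q * thetaTwo q) * (thetaTwo q * thetaTwo q) by ring]
    unfold thetaTwo
    rw [tsum_mul_tsum_of_summable_norm hs2 hs2,
      tsum_mul_tsum_of_summable_norm hn22 hn22]
    exact tsum_congr fun p => hterm2 p
  -- value-level summability over the quadruple index
  have hS3P : Summable (fun p : (ℤ × ℤ) × ℤ × ℤ =>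
      q ^ (p.1.1 ^ 2 + p.1.2 ^ 2 + p.2.1 ^ 2 + p.2.2 ^ 2)) := by
    refine ((hn33.mul_norm hn33).of_norm).congr fun p => ?_
    rw [zpow_add₀ hq, zpow_add₀ hq, zpow_add₀ hq]
    ring
  have hS4P : Summable (fun p : (ℤ × ℤ) × ℤ × ℤ =>
      (-1 : ℂ) ^ (p.1.1 + p.1.2 + p.2.1 + p.2.2) *
        q ^ (p.1.1 ^ 2 + p.1.2 ^ 2 + p.2.1 ^ 2 + p.2.2 ^ 2)) := by
    refine ((hn44.mul_norm hn44).of_norm).congr fun p => ?_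
    rw [zpow_add₀ hq, zpow_add₀ hq, zpow_add₀ hq, zpow_add₀ hm, zpow_add₀ hm, zpow_add₀ hm]
    ring
  have hS2Pn : Summable (fun p : (ℤ × ℤ) × ℤ × ℤ => ‖jacC q p‖) := by
    refine (hn22.mul_norm hn22).congr fun p => ?_
    rw [hterm2 p]
  -- the common target sum
  set T : ℂ := ∑' p : (ℤ × ℤ) × ℤ × ℤ,
    q ^ ((2 * p.1.1 + 1 - p.1.2 - p.2.1 - p.2.2) ^ 2 + p.1.2 ^ 2 + p.2.1 ^ 2 + p.2.2 ^ 2)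
    with hT
  -- Step C : θ₃⁴ - θ₄⁴ = 2T
  have hC : thetaThree q ^ 4 - thetaFour q ^ 4 = 2 * T := by
    rw [E3, E4, ← hS3P.tsum_sub hS4P, hT, ← tsum_mul_left]
    refine tsum_eq_tsum_of_ne_zero_bij
      (fun x => ((2 * x.1.1.1 + 1 - x.1.1.2 - x.1.2.1 - x.1.2.2, x.1.1.2),
        (x.1.2.1, x.1.2.2))) ?_ ?_ ?_
    · rintro ⟨⟨⟨a, b⟩, c, d⟩, hx⟩ ⟨⟨⟨a', b'⟩, c', d'⟩, hy⟩ h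
      dsimp only at h
      simp only [Prod.mk.injEq] at h
      simp only [Subtype.mk.injEq, Prod.mk.injEq]
      omega
    · rintro ⟨⟨a, b⟩, c, d⟩ hp
      have hodd : Odd (a + b + c + d) := by
        by_contra hcon
        rw [Int.not_odd_iff_even] at hcon
        apply hp
        simp only [Function.mem_support, ne_eq, not_not]
        rw [Even.neg_one_zpow hcon]
        ring
      obtain ⟨k, hk⟩ := hodd
      refine ⟨⟨((k, b), (c, d)), mul_ne_zero two_ne_zero (zpow_ne_zero _ hq)⟩, ?_⟩
      dsimp only
      simp only [Prod.mk.injEq, and_true, true_and]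
      omega
    · rintro ⟨⟨⟨k, u⟩, v, w⟩, hx⟩
      dsimp only
      rw [show 2 * k + 1 - u - v - w + u + v + w = 2 * k + 1 by ring,
        Odd.neg_one_zpow ⟨k, by ring⟩]
      ring
  -- Step D : θ₂⁴ = T + T
  have sfE : Summable (jacE q) := by
    refine Summable.of_norm_bounded hS2Pn fun p => ?_
    unfold jacE
    by_cases h : Even (p.1.1 + p.1.2 + p.2.1 + p.2.2) <;> simp [h]
  have sfO : Summable (jacO q) := by
    refine Summable.of_norm_bounded hS2Pn fun p => ?_
    unfold jacO
    by_cases h : Even (p.1.1 + p.1.2 + p.2.1 + p.2.2) <;> simp [h]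
  have hsplit : thetaTwo q ^ 4 = (∑' p, jacE q p) + (∑' p, jacO q p) := by
    rw [E2, ← sfE.tsum_add sfO]
    refine tsum_congr fun p => ?_
    unfold jacE jacO
    by_cases h : Even (p.1.1 + p.1.2 + p.2.1 + p.2.2) <;> simp [h]
  have hE : (∑' p, jacE q p) = T := by
    rw [hT]
    refine tsum_eq_tsum_of_ne_zero_bij
      (fun x => ((x.1.1.1, x.1.1.1 - x.1.1.2 - x.1.2.2),
        (x.1.1.1 - x.1.2.1 - x.1.2.2, x.1.1.1 - x.1.1.2 - x.1.2.1))) ?_ ?_ ?_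
    · rintro ⟨⟨⟨a, b⟩, c, d⟩, hx⟩ ⟨⟨⟨a', b'⟩, c', d'⟩, hy⟩ h
      dsimp only at h
      simp only [Prod.mk.injEq] at h
      simp only [Subtype.mk.injEq, Prod.mk.injEq]
      omega
    · rintro ⟨⟨a, b⟩, c, d⟩ hp
      have hev : Even (a + b + c + d) := by
        by_contra hcon
        exact hp (by simp only [Function.mem_support, ne_eq, not_not, jacE, if_neg hcon])
      obtain ⟨m, hmm⟩ := hev
      refine ⟨⟨((a, m - b - d), (m - c - d, m - b - c)), zpow_ne_zero _ hq⟩, ?_⟩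
      dsimp only
      simp only [Prod.mk.injEq, and_true, true_and]
      omega
    · rintro ⟨⟨⟨k, u⟩, v, w⟩, hx⟩
      simp only [jacE, jacC]
      rw [if_pos ⟨2 * k - u - v - w, by ring⟩, ← Complex.cpow_intCast q]
      congr 1
      push_cast
      ring
  have hO : (∑' p, jacO q p) = T := by
    rw [hT]
    refine tsum_eq_tsum_of_ne_zero_bij
      (fun x => ((-x.1.1.1 - 1, x.1.1.1 - x.1.1.2 - x.1.2.2),
        (x.1.1.1 - x.1.2.1 - x.1.2.2, x.1.1.1 - x.1.1.2 - x.1.2.1))) ?_ ?_ ?_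
    · rintro ⟨⟨⟨a, b⟩, c, d⟩, hx⟩ ⟨⟨⟨a', b'⟩, c', d'⟩, hy⟩ h
      dsimp only at h
      simp only [Prod.mk.injEq] at h
      simp only [Subtype.mk.injEq, Prod.mk.injEq]
      omega
    · rintro ⟨⟨a, b⟩, c, d⟩ hp
      have hod : ¬ Even (a + b + c + d) := by
        intro hcon
        exact hp (by simp only [Function.mem_support, ne_eq, not_not, jacO, if_pos hcon])
      rw [Int.not_even_iff_odd] at hod
      obtain ⟨m, hmm⟩ := hod
      refine ⟨⟨((-a - 1, c - m - 1), (b - m - 1, d - m - 1)), zpow_ne_zero _ hq⟩, ?_⟩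
      dsimp only
      simp only [Prod.mk.injEq, and_true, true_and]
      omega
    · rintro ⟨⟨⟨k, u⟩, v, w⟩, hx⟩
      simp only [jacO, jacC]
      rw [if_neg (by rw [Int.not_even_iff_odd]; exact ⟨k - u - v - w - 1, by ring⟩),
        ← Complex.cpow_intCast q]
      congr 1
      push_cast
      ring
  have hD : thetaTwo q ^ 4 = T + T := by rw [hsplit, hE, hO]
  linear_combination hC - hD
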